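/- Let H(t) be the solution of the matrix Riccati equation H'(t) + H(t)² = F(t) on an interval [0, τ], where F(t) is a continuous family of real symmetric (m−1)×(m−1) matrices, with initial condition H(0) = H₀ a complex symmetric matrix with positive-definite imaginary part. Then H(t) exists for all t ∈ [0, τ], H(t) is complex symmetric, and Im H(t) is positive-definite for all t ∈ [0, τ]. -/

import Mathlib

open Matrix Set
open scoped NNReal

section ODE
variable {E : Type*} [NormedAddCommGroup E] [NormedSpace ℝ E] [CompleteSpace E]

private lemma glue_solutions (v : ℝ → E → E) {a b c : ℝ} (hab : a ≤ b) (hbc : b ≤ c)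
    {f g : ℝ → E} (hfg : f b = g b)
    (hf : ∀ t ∈ Set.Icc a b, HasDerivWithinAt f (v t (f t)) (Set.Icc a b) t)
    (hg : ∀ t ∈ Set.Icc b c, HasDerivWithinAt g (v t (g t)) (Set.Icc b c) t) :
    ∃ h : ℝ → E, h a = f a ∧ ∀ t ∈ Set.Icc a c, HasDerivWithinAt h (v t (h t)) (Set.Icc a c) t := by
  classical
  set h : ℝ → E := fun t => if t ≤ b then f t else g t with hh
  have hhf : ∀ u ∈ Icc a b, h u = f u := fun u hu => if_pos hu.2
  have hhg : ∀ u ∈ Icc b c, h u = g u := by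
    intro u hu
    rcases eq_or_lt_of_le hu.1 with h1 | h1
    · simp [hh, ← h1, hfg]
    · simp [hh, not_le.2 h1]
  refine ⟨h, hhf a ⟨le_refl a, hab⟩, ?_⟩
  intro t ht
  rcases lt_trichotomy t b with htb | htb | htb
  · have ht' : t ∈ Icc a b := ⟨ht.1, htb.le⟩
    have h1 : HasDerivWithinAt f (v t (f t)) (Icc a c ∩ Iio b) t :=
      (hf t ht').mono (fun u hu => ⟨hu.1.1, hu.2.le⟩)
    have h2 : HasDerivWithinAt h (v t (h t)) (Icc a c ∩ Iio b) t := by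
      rw [hhf t ht']
      exact h1.congr (fun u hu => hhf u ⟨hu.1.1, hu.2.le⟩) (hhf t ht')
    exact (hasDerivWithinAt_inter (Iio_mem_nhds htb)).mp h2
  · subst htb
    rw [show Icc a c = Icc a t ∪ Icc t c from (Icc_union_Icc_eq_Icc hab hbc).symm]
    refine HasDerivWithinAt.union ?_ ?_
    · rw [hhf t ⟨hab, le_refl t⟩]
      exact (hf t ⟨hab, le_refl t⟩).congr hhf (hhf t ⟨hab, le_refl t⟩)
    · rw [hhf t ⟨hab, le_refl t⟩, hfg]
      exact (hg t ⟨le_refl t, hbc⟩).congr hhg (hhg t ⟨le_refl t, hbc⟩)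
  · have ht' : t ∈ Icc b c := ⟨htb.le, ht.2⟩
    have h1 : HasDerivWithinAt g (v t (g t)) (Icc a c ∩ Ioi b) t :=
      (hg t ht').mono (fun u hu => ⟨le_of_lt hu.2, hu.1.2⟩)
    have h2 : HasDerivWithinAt h (v t (h t)) (Icc a c ∩ Ioi b) t := by
      rw [hhg t ht']
      exact h1.congr (fun u hu => hhg u ⟨le_of_lt hu.2, hu.1.2⟩) (hhg t ht')
    exact (hasDerivWithinAt_inter (Ioi_mem_nhds htb)).mp h2

private lemma local_solution (v : ℝ → E → E) {K : ℝ≥0} (hK : 1 ≤ (K : ℝ)) {τ : ℝ}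
    (hlip : ∀ t ∈ Set.Icc (0:ℝ) τ, ∀ x y : E, ‖v t x - v t y‖ ≤ K * ‖x - y‖)
    (hv0 : ∀ t ∈ Set.Icc (0:ℝ) τ, v t 0 = 0)
    (hcont : ∀ x : E, ContinuousOn (fun t => v t x) (Set.Icc (0:ℝ) τ))
    {a c : ℝ} (hac : a ≤ c) (hstep : c - a ≤ 1/(2*K)) (hsub : Set.Icc a c ⊆ Set.Icc 0 τ)
    (y₀ : E) :
    ∃ f : ℝ → E, f a = y₀ ∧ ∀ t ∈ Set.Icc a c, HasDerivWithinAt f (v t (f t)) (Set.Icc a c) t := by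
  have hKpos : (0:ℝ) < K := lt_of_lt_of_le one_pos hK
  have hpl : IsPicardLindelof v (tmin := a) (tmax := c) ⟨a, le_refl a, hac⟩ y₀ (‖y₀‖₊ + 1) 0
      (K*(2*‖y₀‖₊+1)) K := by
    constructor
    · intro t ht
      apply LipschitzOnWith.of_dist_le_mul
      intro x _ y _
      rw [dist_eq_norm, dist_eq_norm]
      exact hlip t (hsub ht) x y
    · intro x _
      exact (hcont x).mono hsub
    · intro t ht x hx
      have h1 : ‖v t x‖ ≤ K * ‖x‖ := by
        have := hlip t (hsub ht) x 0
        simpa [hv0 t (hsub ht)] using this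
      have h2 : ‖x‖ ≤ 2*‖y₀‖+1 := by
        have h4 := mem_closedBall_iff_norm.mp hx
        push_cast at h4
        have h3 : ‖x‖ ≤ ‖y₀‖ + ‖x - y₀‖ := norm_le_insert' x y₀
        linarith
      push_cast
      calc ‖v t x‖ ≤ K * ‖x‖ := h1
        _ ≤ K * (2*‖y₀‖+1) := by
            apply mul_le_mul_of_nonneg_left h2 hKpos.le
    · have hmax : max (c - a) (a - a) = c - a := by
        rw [sub_self]; exact max_eq_left (by linarith)
      show ((K*(2*‖y₀‖₊+1) : ℝ≥0):ℝ) * max (c - a) (a - a) ≤ ((‖y₀‖₊ + 1 : ℝ≥0):ℝ) - ((0:ℝ≥0):ℝ)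
      rw [hmax]
      push_cast
      rw [sub_zero]
      have h1 : (K:ℝ) * (2*‖y₀‖+1) * (c - a) ≤ K * (2*‖y₀‖+1) * (1/(2*K)) := by
        apply mul_le_mul_of_nonneg_left hstep
        positivity
      have h2 : (K:ℝ) * (2*‖y₀‖+1) * (1/(2*K)) = (2*‖y₀‖+1)/2 := by
        field_simp
      have h3 : (2*‖y₀‖+1)/2 ≤ ‖y₀‖ + 1 := by linarith [norm_nonneg y₀]
      linarith
  exact hpl.exists_eq_forall_mem_Icc_hasDerivWithinAt₀

private lemma global_solution (v : ℝ → E → E) {τ : ℝ} (hτ : 0 < τ) {K : ℝ≥0}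
    (hK : 1 ≤ (K : ℝ))
    (hlip : ∀ t ∈ Set.Icc (0:ℝ) τ, ∀ x y : E, ‖v t x - v t y‖ ≤ K * ‖x - y‖)
    (hv0 : ∀ t ∈ Set.Icc (0:ℝ) τ, v t 0 = 0)
    (hcont : ∀ x : E, ContinuousOn (fun t => v t x) (Set.Icc (0:ℝ) τ))
    (x₀ : E) :
    ∃ f : ℝ → E, f 0 = x₀ ∧
      ∀ t ∈ Set.Icc (0:ℝ) τ, HasDerivWithinAt f (v t (f t)) (Set.Icc 0 τ) t := by
  have hKpos : (0:ℝ) < K := lt_of_lt_of_le one_pos hK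
  set h : ℝ := 1/(2*(K:ℝ)) with hh
  have hhpos : 0 < h := by positivity
  have key : ∀ n : ℕ, ∃ f : ℝ → E, f 0 = x₀ ∧
      ∀ t ∈ Set.Icc (0:ℝ) (min (n*h) τ),
        HasDerivWithinAt f (v t (f t)) (Set.Icc 0 (min (n*h) τ)) t := by
    intro n; induction n with
    | zero =>
      have : min ((0:ℕ)*h) τ = 0 := by simp [hτ.le]
      rw [this]
      exact local_solution v hK hlip hv0 hcont (le_refl 0) (by rw [sub_self]; positivity)
        (by intro u hu; exact ⟨hu.1, le_trans hu.2 hτ.le⟩) x₀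
    | succ n ih =>
      obtain ⟨f, hf0, hfsol⟩ := ih
      by_cases hb : τ ≤ n*h
      · have e1 : min ((n:ℝ)*h) τ = τ := min_eq_right hb
        have e2 : min (((n:ℕ)+1:ℕ)*h) τ = τ := by
          apply min_eq_right
          push_cast
          nlinarith
        rw [e1] at hfsol
        rw [e2]
        exact ⟨f, hf0, hfsol⟩
      · push_neg at hb
        have hnh : (0:ℝ) ≤ (n:ℝ)*h := mul_nonneg (Nat.cast_nonneg n) hhpos.le
        have hbeq : min ((n:ℝ)*h) τ = (n:ℝ)*h := min_eq_left hb.le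
        have hb0 : (0:ℝ) ≤ min ((n:ℝ)*h) τ := le_min hnh hτ.le
        have hcc : ((n+1 : ℕ) : ℝ)*h = (n:ℝ)*h + h := by push_cast; ring
        have hbc : min ((n:ℝ)*h) τ ≤ min (((n+1 : ℕ) : ℝ)*h) τ := by
          apply min_le_min _ le_rfl
          rw [hcc]; linarith
        have hcτ : min (((n+1 : ℕ) : ℝ)*h) τ ≤ τ := min_le_right _ _
        have hstep : min (((n+1 : ℕ) : ℝ)*h) τ - min ((n:ℝ)*h) τ ≤ 1/(2*(K:ℝ)) := by
          have hc1 : min (((n+1 : ℕ) : ℝ)*h) τ ≤ (n:ℝ)*h + h := by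
            rw [← hcc]; exact min_le_left _ _
          rw [hbeq, ← hh]
          linarith
        obtain ⟨g, hg0, hgsol⟩ := local_solution v hK hlip hv0 hcont hbc hstep
          (fun u hu => ⟨le_trans hb0 hu.1, le_trans hu.2 hcτ⟩) (f (min ((n:ℝ)*h) τ))
        obtain ⟨F, hF0, hFsol⟩ := glue_solutions v hb0 hbc hg0.symm hfsol hgsol
        exact ⟨F, by rw [hF0, hf0], hFsol⟩
  obtain ⟨n, hn⟩ := exists_nat_ge (τ / h)
  have hτn : τ ≤ n * h := by
    rw [div_le_iff₀ hhpos] at hn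
    exact hn
  obtain ⟨f, hf0, hfsol⟩ := key n
  rw [min_eq_right hτn] at hfsol
  exact ⟨f, hf0, hfsol⟩

end ODE

open Matrix Set
open scoped NNReal ComplexConjugate

section MatrixCalc

variable {d : ℕ} {s : Set ℝ} {t : ℝ}

private lemma entry_mul {A B : ℝ → Matrix (Fin d) (Fin d) ℂ}
    {A' B' : Matrix (Fin d) (Fin d) ℂ}
    (hA : ∀ i j, HasDerivWithinAt (fun u => A u i j) (A' i j) s t)
    (hB : ∀ i j, HasDerivWithinAt (fun u => B u i j) (B' i j) s t) :
    ∀ i j, HasDerivWithinAt (fun u => (A u * B u) i j)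
      ((A' * B t + A t * B') i j) s t := by
  intro i j
  simp only [Matrix.mul_apply, Matrix.add_apply]
  rw [← Finset.sum_add_distrib]
  exact HasDerivWithinAt.fun_sum fun k _ => (hA i k).mul (hB k j)

private lemma det_diff {A : ℝ → Matrix (Fin d) (Fin d) ℂ}
    (hA : ∀ i j, DifferentiableWithinAt ℝ (fun u => A u i j) s t) :
    DifferentiableWithinAt ℝ (fun u => (A u).det) s t := by
  simp only [Matrix.det_apply']
  apply DifferentiableWithinAt.fun_sum
  intro σ _
  exact (differentiableWithinAt_const _).mul
    (DifferentiableWithinAt.fun_finset_prod fun i _ => hA (σ i) i)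

private lemma adj_diff {A : ℝ → Matrix (Fin d) (Fin d) ℂ}
    (hA : ∀ i j, DifferentiableWithinAt ℝ (fun u => A u i j) s t) :
    ∀ i j, DifferentiableWithinAt ℝ (fun u => (A u).adjugate i j) s t := by
  intro i j
  simp only [Matrix.adjugate_apply]
  apply det_diff
  intro i' j'
  simp only [Matrix.updateRow_apply]
  by_cases h : i' = j
  · simp only [h, if_pos rfl]
    exact differentiableWithinAt_const _
  · simp only [if_neg h]
    exact hA i' j'

private lemma inv_hasDeriv (hs : UniqueDiffWithinAt ℝ s t) (ht : t ∈ s)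
    {A : ℝ → Matrix (Fin d) (Fin d) ℂ} {A' : Matrix (Fin d) (Fin d) ℂ}
    (hA : ∀ i j, HasDerivWithinAt (fun u => A u i j) (A' i j) s t)
    (hinv : ∀ u ∈ s, IsUnit (A u).det) :
    ∀ i j, HasDerivWithinAt (fun u => (A u)⁻¹ i j)
      ((-((A t)⁻¹ * A' * (A t)⁻¹)) i j) s t := by
  have hdiff : ∀ i j, DifferentiableWithinAt ℝ (fun u => (A u)⁻¹ i j) s t := by
    intro i j
    have he : ∀ u, (A u)⁻¹ i j = ((A u).det)⁻¹ * (A u).adjugate i j := by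
      intro u
      rw [Matrix.inv_def, Matrix.smul_apply, smul_eq_mul, Ring.inverse_eq_inv']
    simp only [he]
    apply DifferentiableWithinAt.mul
    · exact (det_diff fun i' j' => (hA i' j').differentiableWithinAt).inv
        ((hinv t ht).ne_zero)
    · exact adj_diff (fun i' j' => (hA i' j').differentiableWithinAt) i j
  set B : Matrix (Fin d) (Fin d) ℂ :=
    Matrix.of fun i j => derivWithin (fun u => (A u)⁻¹ i j) s t with hBdef
  have hG : ∀ i j, HasDerivWithinAt (fun u => (A u)⁻¹ i j) (B i j) s t :=
    fun i j => (hdiff i j).hasDerivWithinAt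
  have hprod := entry_mul hA hG
  have hone : ∀ i j, HasDerivWithinAt (fun u => (A u * (A u)⁻¹) i j) 0 s t := by
    intro i j
    have hc : HasDerivWithinAt (fun _ : ℝ => ((1 : Matrix (Fin d) (Fin d) ℂ) i j)) 0 s t :=
      hasDerivWithinAt_const t s _
    exact hc.congr (fun u hu => by rw [Matrix.mul_nonsing_inv _ (hinv u hu)])
      (by rw [Matrix.mul_nonsing_inv _ (hinv t ht)])
  have hmat : A' * (A t)⁻¹ + A t * B = 0 := by
    ext i j
    have h1 := (hprod i j).derivWithin hs
    have h2 := (hone i j).derivWithin hs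
    rw [Matrix.zero_apply, ← h2, ← h1]
  have hB : B = -((A t)⁻¹ * A' * (A t)⁻¹) := by
    have h3 : A t * B = -(A' * (A t)⁻¹) := by
      rw [eq_neg_iff_add_eq_zero, add_comm]
      exact hmat
    calc B = ((A t)⁻¹ * A t) * B := by
          rw [Matrix.nonsing_inv_mul _ (hinv t ht), Matrix.one_mul]
      _ = (A t)⁻¹ * (A t * B) := by rw [Matrix.mul_assoc]
      _ = (A t)⁻¹ * -(A' * (A t)⁻¹) := by rw [h3]
      _ = -((A t)⁻¹ * A' * (A t)⁻¹) := by
          rw [Matrix.mul_neg, Matrix.mul_assoc]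
  intro i j
  rw [← hB]
  exact hG i j

end MatrixCalc

open Matrix Set
open scoped NNReal ComplexConjugate

section Quad
variable {d : ℕ}

private lemma conj_quad (M : Matrix (Fin d) (Fin d) ℂ) (w : Fin d → ℂ) :
    conj (star w ⬝ᵥ (M *ᵥ w)) = star w ⬝ᵥ (Mᴴ *ᵥ w) := by
  simp only [dotProduct, mulVec, conjTranspose_apply, Pi.star_apply, Finset.mul_sum,
    map_sum, RCLike.star_def]
  rw [Finset.sum_comm]
  apply Finset.sum_congr rfl; intro i _
  apply Finset.sum_congr rfl; intro j _
  simp only [_root_.map_mul, Complex.conj_conj]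
  ring

private lemma im_eq_of_sub_conj {z z' : ℂ} (h : z - conj z = z' - conj z') : z.im = z'.im := by
  rw [Complex.sub_conj, Complex.sub_conj] at h
  have h2 := mul_right_cancel₀ Complex.I_ne_zero h
  have h3 : 2 * z.im = 2 * z'.im := by exact_mod_cast h2
  linarith

private lemma im_quad_real (H : Matrix (Fin d) (Fin d) ℂ) (x : Fin d → ℝ) :
    (star (fun i => (x i : ℂ)) ⬝ᵥ (H *ᵥ fun i => (x i : ℂ))).im
      = x ⬝ᵥ ((Matrix.of fun i j => (H i j).im : Matrix (Fin d) (Fin d) ℝ) *ᵥ x) := by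
  simp only [dotProduct, mulVec, Pi.star_apply, Complex.im_sum, Finset.mul_sum,
    Matrix.of_apply]
  apply Finset.sum_congr rfl; intro i _
  apply Finset.sum_congr rfl; intro j _
  simp only [RCLike.star_def, Complex.conj_ofReal, Complex.mul_im, Complex.mul_re,
    Complex.ofReal_re, Complex.ofReal_im]
  ring

private lemma im_quadratic_pos {M : Matrix (Fin d) (Fin d) ℂ} (hsymm : Mᵀ = M)
    (him : (Matrix.of fun i j => (M i j).im : Matrix (Fin d) (Fin d) ℝ).PosDef)
    {w : Fin d → ℂ} (hw : w ≠ 0) :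
    0 < (star w ⬝ᵥ (M *ᵥ w)).im := by
  set a : Fin d → ℝ := fun i => (w i).re with ha
  set b : Fin d → ℝ := fun i => (w i).im with hb
  set P : Matrix (Fin d) (Fin d) ℝ := Matrix.of fun i j => (M i j).re with hP
  set Q : Matrix (Fin d) (Fin d) ℝ := Matrix.of fun i j => (M i j).im with hQ
  have hPsymm : ∀ i j, P i j = P j i := by
    intro i j
    have h1 : M j i = M i j := by
      calc M j i = Mᵀ i j := (Matrix.transpose_apply M i j).symm
        _ = M i j := by rw [hsymm]
    simp only [hP, Matrix.of_apply]
    rw [h1]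
  have expand : (star w ⬝ᵥ (M *ᵥ w)).im = ∑ i, ∑ j,
      (P i j * (a i * b j) - P i j * (b i * a j)
        + (Q i j * (a i * a j) + Q i j * (b i * b j))) := by
    simp only [dotProduct, mulVec, Pi.star_apply, Complex.im_sum, Finset.mul_sum]
    apply Finset.sum_congr rfl; intro i _
    apply Finset.sum_congr rfl; intro j _
    simp only [RCLike.star_def, Complex.mul_im, Complex.mul_re, Complex.conj_re,
      Complex.conj_im, hP, hQ, ha, hb, Matrix.of_apply]
    ring
  have hswap : ∑ i, ∑ j, P i j * (b i * a j) = ∑ i, ∑ j, P i j * (a i * b j) := by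
    rw [Finset.sum_comm]
    apply Finset.sum_congr rfl; intro i _
    apply Finset.sum_congr rfl; intro j _
    rw [hPsymm j i]
    ring
  have hdot : ∀ (y : Fin d → ℝ), y ⬝ᵥ (Q *ᵥ y) = ∑ i, ∑ j, Q i j * (y i * y j) := by
    intro y
    simp only [dotProduct, mulVec, Finset.mul_sum]
    apply Finset.sum_congr rfl; intro i _
    apply Finset.sum_congr rfl; intro j _
    ring
  have expand2 : (star w ⬝ᵥ (M *ᵥ w)).im = a ⬝ᵥ (Q *ᵥ a) + b ⬝ᵥ (Q *ᵥ b) := by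
    rw [expand, hdot a, hdot b]
    simp only [Finset.sum_add_distrib, Finset.sum_sub_distrib, hswap, sub_self, zero_add]
  have hQsemi : ∀ x : Fin d → ℝ, 0 ≤ x ⬝ᵥ (Q *ᵥ x) := by
    intro x
    have := him.posSemidef.dotProduct_mulVec_nonneg x
    simpa using this
  have hQpos : ∀ x : Fin d → ℝ, x ≠ 0 → 0 < x ⬝ᵥ (Q *ᵥ x) := by
    intro x hx
    have := him.dotProduct_mulVec_pos hx
    simpa using this
  have hab : a ≠ 0 ∨ b ≠ 0 := by
    by_contra hcon
    push_neg at hcon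
    apply hw
    funext i
    have h1 : a i = 0 := by rw [hcon.1]; rfl
    have h2 : b i = 0 := by rw [hcon.2]; rfl
    exact Complex.ext h1 h2
  rw [expand2]
  rcases hab with h | h
  · exact add_pos_of_pos_of_nonneg (hQpos a h) (hQsemi b)
  · exact add_pos_of_nonneg_of_pos (hQsemi a) (hQpos b h)

end Quad

open Matrix Set
open scoped NNReal ComplexConjugate

attribute [local instance] Matrix.normedAddCommGroup Matrix.normedSpace

section Const

private lemma const_of_deriv_zero {τ : ℝ} {f : ℝ → ℂ}
    (hf : ∀ t ∈ Set.Icc (0:ℝ) τ, HasDerivWithinAt f 0 (Set.Icc (0:ℝ) τ) t) :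
    ∀ t ∈ Set.Icc (0:ℝ) τ, f t = f 0 := by
  apply constant_of_has_deriv_right_zero
  · exact fun t ht => (hf t ht).continuousWithinAt
  · intro t ht
    have h1 : HasDerivWithinAt f 0 (Icc t τ) t :=
      (hf t ⟨ht.1, ht.2.le⟩).mono (Icc_subset_Icc ht.1 le_rfl)
    rw [← Set.Ici_inter_Iic] at h1
    exact (hasDerivWithinAt_inter (Iic_mem_nhds ht.2)).mp h1

end Const

section EntryCLM

private noncomputable def entryCLM1 (d : ℕ) (i j : Fin d) :
    (Matrix (Fin d) (Fin d) ℂ × Matrix (Fin d) (Fin d) ℂ) →L[ℝ] ℂ :=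
  LinearMap.toContinuousLinearMap
    { toFun := fun p => p.1 i j,
      map_add' := fun _ _ => rfl,
      map_smul' := fun _ _ => rfl }

private noncomputable def entryCLM2 (d : ℕ) (i j : Fin d) :
    (Matrix (Fin d) (Fin d) ℂ × Matrix (Fin d) (Fin d) ℂ) →L[ℝ] ℂ :=
  LinearMap.toContinuousLinearMap
    { toFun := fun p => p.2 i j,
      map_add' := fun _ _ => rfl,
      map_smul' := fun _ _ => rfl }

private lemma entryCLM1_apply (d : ℕ) (i j : Fin d)
    (p : Matrix (Fin d) (Fin d) ℂ × Matrix (Fin d) (Fin d) ℂ) :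
    entryCLM1 d i j p = p.1 i j := rfl

private lemma entryCLM2_apply (d : ℕ) (i j : Fin d)
    (p : Matrix (Fin d) (Fin d) ℂ × Matrix (Fin d) (Fin d) ℂ) :
    entryCLM2 d i j p = p.2 i j := rfl

end EntryCLM

open Matrix Set
open scoped NNReal ComplexConjugate

/-- Global solvability of the matrix Riccati equation `H' + H² = F` on `[0, τ]` with `F`
continuous real symmetric and `H(0) = H₀` complex symmetric with positive-definite imaginary
part: the solution `H(t)` exists on all of `[0, τ]`, is complex symmetric, and `Im H(t)`
remains positive definite. -/
theorem stmt_19 (d : ℕ) (τ : ℝ) (hτ : 0 < τ) (F : ℝ → Matrix (Fin d) (Fin d) ℝ)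
    (hFcont : Continuous F) (hFsymm : ∀ t, (F t)ᵀ = F t)
    (H₀ : Matrix (Fin d) (Fin d) ℂ) (hH₀symm : H₀ᵀ = H₀)
    (hH₀im : (Matrix.of fun i j => (H₀ i j).im : Matrix (Fin d) (Fin d) ℝ).PosDef) :
    ∃ H : ℝ → Matrix (Fin d) (Fin d) ℂ, H 0 = H₀ ∧
      (∀ t ∈ Set.Icc (0 : ℝ) τ, ∀ i j, HasDerivWithinAt (fun s => H s i j)
        (((F t).map Complex.ofReal - H t * H t) i j) (Set.Icc (0 : ℝ) τ) t) ∧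
      ∀ t ∈ Set.Icc (0 : ℝ) τ, (H t)ᵀ = H t ∧
        (Matrix.of fun i j => (H t i j).im : Matrix (Fin d) (Fin d) ℝ).PosDef := by
  classical
  set Fc : ℝ → Matrix (Fin d) (Fin d) ℂ := fun t => (F t).map Complex.ofReal with hFcdef
  -- symmetry facts about Fc
  have hFch : ∀ t, (Fc t)ᴴ = Fc t := by
    intro t
    ext i j
    have hs : (F t)ᵀ i j = F t i j := by rw [hFsymm t]
    rw [Matrix.transpose_apply] at hs
    simp only [hFcdef, Matrix.conjTranspose_apply, Matrix.map_apply, RCLike.star_def,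
      Complex.conj_ofReal]
    exact_mod_cast hs
  have hFctr : ∀ t, (Fc t)ᵀ = Fc t := by
    intro t
    ext i j
    have hs : (F t)ᵀ i j = F t i j := by rw [hFsymm t]
    rw [Matrix.transpose_apply] at hs
    simp only [hFcdef, Matrix.transpose_apply, Matrix.map_apply]
    exact_mod_cast hs
  -- bound on entries of F over [0, τ]
  have hentrybound : ∀ i j : Fin d, ∃ C : ℝ, ∀ t ∈ Icc (0:ℝ) τ, ‖F t i j‖ ≤ C := fun i j =>
    isCompact_Icc.exists_bound_of_continuousOn ((hFcont.matrix_elem i j).continuousOn)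
  choose Cf hCf using hentrybound
  set CF : ℝ := ∑ p : Fin d × Fin d, |Cf p.1 p.2| with hCFdef
  have hCF0 : 0 ≤ CF := Finset.sum_nonneg fun p _ => abs_nonneg _
  have hCFb : ∀ t ∈ Icc (0:ℝ) τ, ∀ i j, ‖F t i j‖ ≤ CF := by
    intro t ht i j
    calc ‖F t i j‖ ≤ Cf i j := hCf i j t ht
      _ ≤ |Cf i j| := le_abs_self _
      _ ≤ CF := Finset.single_le_sum (f := fun p : Fin d × Fin d => |Cf p.1 p.2|)
          (fun p _ => abs_nonneg _) (Finset.mem_univ (i, j))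
  set K : ℝ≥0 := ⟨(d:ℝ) * CF + 1, by positivity⟩ with hKdef
  have hKr : (K : ℝ) = (d:ℝ) * CF + 1 := rfl
  have hK1 : 1 ≤ (K : ℝ) := by
    rw [hKr]
    have h0 : 0 ≤ (d:ℝ) * CF := by positivity
    linarith
  -- the vector field
  set v : ℝ → (Matrix (Fin d) (Fin d) ℂ × Matrix (Fin d) (Fin d) ℂ) → (Matrix (Fin d) (Fin d) ℂ × Matrix (Fin d) (Fin d) ℂ) := fun t p => (p.2, Fc t * p.1) with hvdef
  have hmulbound : ∀ t ∈ Icc (0:ℝ) τ, ∀ A : Matrix (Fin d) (Fin d) ℂ,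
      ‖Fc t * A‖ ≤ (d:ℝ) * CF * ‖A‖ := by
    intro t ht A
    apply (Matrix.norm_le_iff (by positivity)).mpr
    intro i j
    calc ‖(Fc t * A) i j‖ = ‖∑ k, Fc t i k * A k j‖ := by rw [Matrix.mul_apply]
      _ ≤ ∑ k, ‖Fc t i k * A k j‖ := norm_sum_le _ _
      _ ≤ ∑ _k : Fin d, CF * ‖A‖ := by
          apply Finset.sum_le_sum
          intro k _
          rw [norm_mul]
          apply mul_le_mul _ (Matrix.norm_entry_le_entrywise_sup_norm _) (norm_nonneg _) hCF0
          have he : Fc t i k = ((F t i k : ℝ) : ℂ) := rfl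
          rw [he, Complex.norm_real]
          exact hCFb t ht i k
      _ = (d:ℝ) * CF * ‖A‖ := by
          rw [Finset.sum_const, Finset.card_univ, Fintype.card_fin, nsmul_eq_mul]
          ring
  have hlip : ∀ t ∈ Icc (0:ℝ) τ, ∀ x y : Matrix (Fin d) (Fin d) ℂ × Matrix (Fin d) (Fin d) ℂ, ‖v t x - v t y‖ ≤ (K:ℝ) * ‖x - y‖ := by
    intro t ht x y
    have hxy : v t x - v t y = (x.2 - y.2, Fc t * (x.1 - y.1)) := by
      rw [Matrix.mul_sub]
      rfl
    rw [hxy, Prod.norm_def, Prod.norm_def]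
    have hn0 : (0:ℝ) ≤ ‖(x-y).1‖ ⊔ ‖(x-y).2‖ := le_trans (norm_nonneg _) (le_max_left _ _)
    apply max_le
    · calc ‖x.2 - y.2‖ = ‖(x - y).2‖ := by rw [Prod.snd_sub]
        _ ≤ ‖(x-y).1‖ ⊔ ‖(x-y).2‖ := le_max_right _ _
        _ ≤ (K:ℝ) * (‖(x-y).1‖ ⊔ ‖(x-y).2‖) := le_mul_of_one_le_left hn0 hK1
    · calc ‖Fc t * (x.1 - y.1)‖ ≤ (d:ℝ) * CF * ‖x.1 - y.1‖ := hmulbound t ht _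
        _ = (d:ℝ) * CF * ‖(x-y).1‖ := by rw [Prod.fst_sub]
        _ ≤ (d:ℝ) * CF * (‖(x-y).1‖ ⊔ ‖(x-y).2‖) := by
            apply mul_le_mul_of_nonneg_left (le_max_left _ _) (by positivity)
        _ ≤ (K:ℝ) * (‖(x-y).1‖ ⊔ ‖(x-y).2‖) := by
            apply mul_le_mul_of_nonneg_right _ hn0
            rw [hKr]; linarith
  have hv0 : ∀ t ∈ Icc (0:ℝ) τ, v t 0 = 0 := by
    intro t _
    have h : v t 0 = ((0: Matrix (Fin d) (Fin d) ℂ × Matrix (Fin d) (Fin d) ℂ).2, Fc t * (0: Matrix (Fin d) (Fin d) ℂ × Matrix (Fin d) (Fin d) ℂ).1) := rfl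
    rw [h, Prod.fst_zero, Prod.snd_zero, Matrix.mul_zero]
    rfl
  have hcont : ∀ x : Matrix (Fin d) (Fin d) ℂ × Matrix (Fin d) (Fin d) ℂ, ContinuousOn (fun t => v t x) (Icc (0:ℝ) τ) := by
    intro x
    apply Continuous.continuousOn
    apply Continuous.prodMk continuous_const
    have : Continuous fun t => Fc t * x.1 := by
      apply continuous_pi
      intro i
      apply continuous_pi
      intro j
      have he : ∀ t, (Fc t * x.1) i j = ∑ k, ((F t i k : ℝ):ℂ) * x.1 k j := by
        intro t; rw [Matrix.mul_apply]; rfl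
      simp only [he]
      apply continuous_finset_sum
      intro k _
      exact (Complex.continuous_ofReal.comp (hFcont.matrix_elem i k)).mul continuous_const
    exact this
  obtain ⟨sol, hsol0, hsol⟩ := global_solution v hτ hK1 hlip hv0 hcont
    ((1 : Matrix (Fin d) (Fin d) ℂ), H₀)
  set Y : ℝ → Matrix (Fin d) (Fin d) ℂ := fun u => (sol u).1 with hYdef
  set Z : ℝ → Matrix (Fin d) (Fin d) ℂ := fun u => (sol u).2 with hZdef
  have hY0 : Y 0 = 1 := by show (sol 0).1 = 1; rw [hsol0]
  have hZ0 : Z 0 = H₀ := by show (sol 0).2 = H₀; rw [hsol0]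
  -- entrywise derivatives of Y and Z
  have hYd : ∀ t ∈ Icc (0:ℝ) τ, ∀ i j,
      HasDerivWithinAt (fun u => Y u i j) (Z t i j) (Icc (0:ℝ) τ) t := by
    intro t ht i j
    have h := (entryCLM1 d i j).hasFDerivAt.comp_hasDerivWithinAt t (hsol t ht)
    exact h
  have hZd : ∀ t ∈ Icc (0:ℝ) τ, ∀ i j,
      HasDerivWithinAt (fun u => Z u i j) ((Fc t * Y t) i j) (Icc (0:ℝ) τ) t := by
    intro t ht i j
    have h := (entryCLM2 d i j).hasFDerivAt.comp_hasDerivWithinAt t (hsol t ht)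
    exact h
  -- conjugate-transpose and transpose entrywise derivatives
  have hYHd : ∀ t ∈ Icc (0:ℝ) τ, ∀ i j,
      HasDerivWithinAt (fun u => (Y u)ᴴ i j) ((Z t)ᴴ i j) (Icc (0:ℝ) τ) t := by
    intro t ht i j
    simpa only [Matrix.conjTranspose_apply] using (hYd t ht j i).star
  have hZHd : ∀ t ∈ Icc (0:ℝ) τ, ∀ i j,
      HasDerivWithinAt (fun u => (Z u)ᴴ i j) ((Fc t * Y t)ᴴ i j) (Icc (0:ℝ) τ) t := by
    intro t ht i j
    simpa only [Matrix.conjTranspose_apply] using (hZd t ht j i).star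
  have hYTd : ∀ t ∈ Icc (0:ℝ) τ, ∀ i j,
      HasDerivWithinAt (fun u => (Y u)ᵀ i j) ((Z t)ᵀ i j) (Icc (0:ℝ) τ) t := by
    intro t ht i j
    simpa only [Matrix.transpose_apply] using hYd t ht j i
  have hZTd : ∀ t ∈ Icc (0:ℝ) τ, ∀ i j,
      HasDerivWithinAt (fun u => (Z u)ᵀ i j) ((Fc t * Y t)ᵀ i j) (Icc (0:ℝ) τ) t := by
    intro t ht i j
    simpa only [Matrix.transpose_apply] using hZd t ht j i
  -- the conserved quantity W = Yᴴ Z - Zᴴ Y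
  set W : ℝ → Matrix (Fin d) (Fin d) ℂ := fun u => (Y u)ᴴ * Z u - (Z u)ᴴ * Y u with hWdef
  have hWd : ∀ t ∈ Icc (0:ℝ) τ, ∀ i j,
      HasDerivWithinAt (fun u => W u i j) 0 (Icc (0:ℝ) τ) t := by
    intro t ht i j
    have h1 := entry_mul (hYHd t ht) (fun i j => hZd t ht i j) i j
    have h2 := entry_mul (hZHd t ht) (fun i j => hYd t ht i j) i j
    have h3 := h1.sub h2
    have hid : ((Z t)ᴴ * Z t + (Y t)ᴴ * (Fc t * Y t))
        - ((Fc t * Y t)ᴴ * Y t + (Z t)ᴴ * Z t) = 0 := by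
      rw [Matrix.conjTranspose_mul, hFch t, ← Matrix.mul_assoc]
      rw [Matrix.mul_assoc ((Y t)ᴴ)]
      abel
    have hid' : ((Z t)ᴴ * Z t + (Y t)ᴴ * (Fc t * Y t)) i j
        - ((Fc t * Y t)ᴴ * Y t + (Z t)ᴴ * Z t) i j = 0 := by
      have := congrFun (congrFun hid i) j
      simpa [Matrix.sub_apply] using this
    rw [← hid']
    have hfun : ∀ u, W u i j = ((Y u)ᴴ * Z u) i j - ((Z u)ᴴ * Y u) i j := by
      intro u; simp [hWdef, Matrix.sub_apply]
    simp only [hfun]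
    exact h3
  have hWconst : ∀ t ∈ Icc (0:ℝ) τ, W t = W 0 := by
    intro t ht
    ext i j
    exact const_of_deriv_zero (fun u hu => hWd u hu i j) t ht
  have hW0 : W 0 = H₀ - H₀ᴴ := by
    simp only [hWdef]
    rw [hY0, hZ0, Matrix.conjTranspose_one, Matrix.one_mul, Matrix.mul_one]
  -- the conserved quantity S = Yᵀ Z - Zᵀ Y
  set S : ℝ → Matrix (Fin d) (Fin d) ℂ := fun u => (Y u)ᵀ * Z u - (Z u)ᵀ * Y u with hSdef
  have hSd : ∀ t ∈ Icc (0:ℝ) τ, ∀ i j,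
      HasDerivWithinAt (fun u => S u i j) 0 (Icc (0:ℝ) τ) t := by
    intro t ht i j
    have h1 := entry_mul (hYTd t ht) (fun i j => hZd t ht i j) i j
    have h2 := entry_mul (hZTd t ht) (fun i j => hYd t ht i j) i j
    have h3 := h1.sub h2
    have hid : ((Z t)ᵀ * Z t + (Y t)ᵀ * (Fc t * Y t))
        - ((Fc t * Y t)ᵀ * Y t + (Z t)ᵀ * Z t) = 0 := by
      rw [Matrix.transpose_mul, hFctr t, ← Matrix.mul_assoc]
      rw [Matrix.mul_assoc ((Y t)ᵀ)]
      abel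
    have hid' : ((Z t)ᵀ * Z t + (Y t)ᵀ * (Fc t * Y t)) i j
        - ((Fc t * Y t)ᵀ * Y t + (Z t)ᵀ * Z t) i j = 0 := by
      have := congrFun (congrFun hid i) j
      simpa [Matrix.sub_apply] using this
    rw [← hid']
    have hfun : ∀ u, S u i j = ((Y u)ᵀ * Z u) i j - ((Z u)ᵀ * Y u) i j := by
      intro u; simp [hSdef, Matrix.sub_apply]
    simp only [hfun]
    exact h3
  have hSconst : ∀ t ∈ Icc (0:ℝ) τ, S t = S 0 := by
    intro t ht
    ext i j
    exact const_of_deriv_zero (fun u hu => hSd u hu i j) t ht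
  have hS0 : S 0 = 0 := by
    simp only [hSdef]
    rw [hY0, hZ0, Matrix.transpose_one, Matrix.one_mul, Matrix.mul_one, hH₀symm, sub_self]
  have hSt : ∀ t ∈ Icc (0:ℝ) τ, (Y t)ᵀ * Z t = (Z t)ᵀ * Y t := by
    intro t ht
    have := hSconst t ht
    rw [hS0] at this
    have h2 : (Y t)ᵀ * Z t - (Z t)ᵀ * Y t = 0 := this
    exact sub_eq_zero.mp h2
  -- invertibility of Y t on [0, τ]
  have hYinv : ∀ t ∈ Icc (0:ℝ) τ, IsUnit (Y t).det := by
    intro t ht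
    rw [isUnit_iff_ne_zero]
    intro hdet0
    obtain ⟨w, hw0, hww⟩ := Matrix.exists_mulVec_eq_zero_iff.mpr hdet0
    have e1 : star w ⬝ᵥ (((Y t)ᴴ * Z t) *ᵥ w) = 0 := by
      rw [← Matrix.mulVec_mulVec, Matrix.dotProduct_mulVec, ← Matrix.star_mulVec, hww]
      simp
    have e2 : star w ⬝ᵥ (((Z t)ᴴ * Y t) *ᵥ w) = 0 := by
      rw [← Matrix.mulVec_mulVec, hww, Matrix.mulVec_zero, dotProduct_zero]
    have hc1 : star w ⬝ᵥ (W t *ᵥ w) = 0 := by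
      have : W t = (Y t)ᴴ * Z t - (Z t)ᴴ * Y t := rfl
      rw [this, Matrix.sub_mulVec, dotProduct_sub, e1, e2, sub_zero]
    rw [hWconst t ht, hW0] at hc1
    have hc2 : (star w ⬝ᵥ (H₀ *ᵥ w)) - conj (star w ⬝ᵥ (H₀ *ᵥ w)) = 0 := by
      rw [conj_quad]
      rw [Matrix.sub_mulVec, dotProduct_sub] at hc1
      exact hc1
    have hpos := im_quadratic_pos hH₀symm hH₀im hw0
    rw [Complex.sub_conj] at hc2
    rcases mul_eq_zero.mp hc2 with h | h
    · have : 2 * (star w ⬝ᵥ (H₀ *ᵥ w)).im = 0 := by exact_mod_cast h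
      linarith
    · exact Complex.I_ne_zero h
  -- the solution H
  refine ⟨fun u => Z u * (Y u)⁻¹, ?_, ?_, ?_⟩
  · show Z 0 * (Y 0)⁻¹ = H₀
    rw [hY0, hZ0, inv_one, Matrix.mul_one]
  · -- the Riccati equation
    intro t ht i j
    have hBd := inv_hasDeriv (uniqueDiffOn_Icc hτ t ht) ht (hYd t ht) hYinv
    have h1 := entry_mul (hZd t ht) hBd i j
    have hid2 : (Fc t * Y t) * (Y t)⁻¹ + Z t * (-((Y t)⁻¹ * Z t * (Y t)⁻¹))
        = Fc t - (Z t * (Y t)⁻¹) * (Z t * (Y t)⁻¹) := by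
      rw [Matrix.mul_assoc (Fc t), Matrix.mul_nonsing_inv _ (hYinv t ht), Matrix.mul_one]
      noncomm_ring
    rw [hid2] at h1
    exact h1
  · -- symmetry and positive-definiteness
    intro t ht
    have hdet := hYinv t ht
    have hsym : (Z t * (Y t)⁻¹)ᵀ = Z t * (Y t)⁻¹ := by
      have h1 : (Y t)ᵀ * Z t = (Z t)ᵀ * Y t := hSt t ht
      have hYTdet : IsUnit ((Y t)ᵀ).det := by rw [Matrix.det_transpose]; exact hdet
      have key : (Y t)ᵀ * ((Z t * (Y t)⁻¹)ᵀ) = (Y t)ᵀ * (Z t * (Y t)⁻¹) := by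
        rw [Matrix.transpose_mul, Matrix.transpose_nonsing_inv]
        calc (Y t)ᵀ * (((Y t)ᵀ)⁻¹ * (Z t)ᵀ)
            = ((Y t)ᵀ * ((Y t)ᵀ)⁻¹) * (Z t)ᵀ := by rw [Matrix.mul_assoc]
          _ = (Z t)ᵀ := by rw [Matrix.mul_nonsing_inv _ hYTdet, Matrix.one_mul]
          _ = ((Z t)ᵀ * Y t) * (Y t)⁻¹ := by
              rw [Matrix.mul_assoc, Matrix.mul_nonsing_inv _ hdet, Matrix.mul_one]
          _ = ((Y t)ᵀ * Z t) * (Y t)⁻¹ := by rw [h1]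
          _ = (Y t)ᵀ * (Z t * (Y t)⁻¹) := by rw [Matrix.mul_assoc]
      have h2 := congrArg (fun A => ((Y t)ᵀ)⁻¹ * A) key
      simpa only [← Matrix.mul_assoc, Matrix.nonsing_inv_mul _ hYTdet, Matrix.one_mul]
        using h2
    refine ⟨hsym, Matrix.posDef_iff_dotProduct_mulVec.mpr ⟨?_, ?_⟩⟩
    · -- IsHermitian of the imaginary part
      ext i j
      have h1 : (Z t * (Y t)⁻¹) j i = (Z t * (Y t)⁻¹) i j := by
        conv_rhs => rw [← hsym]
        rw [Matrix.transpose_apply]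
      simp only [Matrix.conjTranspose_apply, Matrix.of_apply, star_trivial]
      rw [h1]
    · -- positive definiteness
      intro x hx
      set u : Fin d → ℂ := fun i => ((x i : ℝ) : ℂ) with hudef
      have hu0 : u ≠ 0 := by
        intro h
        apply hx
        funext i
        have := congrFun h i
        simpa [hudef, Complex.ofReal_eq_zero] using this
      set w : Fin d → ℂ := (Y t)⁻¹ *ᵥ u with hwdef
      have hYw : Y t *ᵥ w = u := by
        rw [hwdef, Matrix.mulVec_mulVec, Matrix.mul_nonsing_inv _ hdet, Matrix.one_mulVec]
      have hw0 : w ≠ 0 := by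
        intro h
        apply hu0
        rw [← hYw, h, Matrix.mulVec_zero]
      have hHu : (Z t * (Y t)⁻¹) *ᵥ u = Z t *ᵥ w := by
        rw [← hYw, Matrix.mulVec_mulVec]
        congr 1
        rw [Matrix.mul_assoc, Matrix.nonsing_inv_mul _ hdet, Matrix.mul_one]
      have hc : star u ⬝ᵥ ((Z t * (Y t)⁻¹) *ᵥ u) = star w ⬝ᵥ (((Y t)ᴴ * Z t) *ᵥ w) := by
        rw [hHu, ← hYw, Matrix.star_mulVec, ← Matrix.dotProduct_mulVec, Matrix.mulVec_mulVec]
      have hconj : conj (star w ⬝ᵥ (((Y t)ᴴ * Z t) *ᵥ w))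
          = star w ⬝ᵥ (((Z t)ᴴ * Y t) *ᵥ w) := by
        rw [conj_quad, Matrix.conjTranspose_mul, Matrix.conjTranspose_conjTranspose]
      have hWt : (Y t)ᴴ * Z t - (Z t)ᴴ * Y t = H₀ - H₀ᴴ := by
        have h1 : W t = W 0 := hWconst t ht
        rw [hW0] at h1
        exact h1
      have hsub : star w ⬝ᵥ (((Y t)ᴴ * Z t) *ᵥ w) - conj (star w ⬝ᵥ (((Y t)ᴴ * Z t) *ᵥ w))
          = star w ⬝ᵥ (H₀ *ᵥ w) - conj (star w ⬝ᵥ (H₀ *ᵥ w)) := by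
        rw [hconj, conj_quad]
        calc star w ⬝ᵥ (((Y t)ᴴ * Z t) *ᵥ w) - star w ⬝ᵥ (((Z t)ᴴ * Y t) *ᵥ w)
            = star w ⬝ᵥ ((((Y t)ᴴ * Z t) - ((Z t)ᴴ * Y t)) *ᵥ w) := by
              rw [Matrix.sub_mulVec, dotProduct_sub]
          _ = star w ⬝ᵥ ((H₀ - H₀ᴴ) *ᵥ w) := by rw [hWt]
          _ = star w ⬝ᵥ (H₀ *ᵥ w) - star w ⬝ᵥ (H₀ᴴ *ᵥ w) := by
              rw [Matrix.sub_mulVec, dotProduct_sub]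
      have him := im_eq_of_sub_conj hsub
      have hpos := im_quadratic_pos hH₀symm hH₀im hw0
      have hquad := im_quad_real (Z t * (Y t)⁻¹) x
      show 0 < star x ⬝ᵥ ((Matrix.of fun i j => ((Z t * (Y t)⁻¹) i j).im) *ᵥ x)
      have hstarx : star x = x := by funext i; simp
      rw [hstarx, ← hquad]
      rw [show (fun i => ((x i : ℝ) : ℂ)) = u from rfl]
      rw [hc, him]
      exact hpos
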